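/- Let A be a Banach algebra, I a closed two-sided ideal of A with A² ⊆ I (where A² is the linear span of products ab). If every continuous derivation from A into I* is inner, then A² is dense in I. -/

import Mathlib

open ContinuousLinearMap Filter Topology

namespace Paper

structure Bimod (A : Type*) [NormedRing A] [NormedAlgebra ℂ A]
    (X : Type*) [NormedAddCommGroup X] [NormedSpace ℂ X] where
  l : A → X →L[ℂ] X
  r : A → X →L[ℂ] X
  l_mul : ∀ a b x, l (a * b) x = l a (l b x)
  r_mul : ∀ a b x, r (a * b) x = r b (r a x)
  lr : ∀ a b x, l a (r b x) = r b (l a x)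

variable {A : Type*} [NormedRing A] [NormedAlgebra ℂ A]
variable {X : Type*} [NormedAddCommGroup X] [NormedSpace ℂ X]

noncomputable def Bimod.dual (M : Bimod A X) : Bimod A (X →L[ℂ] ℂ) where
  l a := (compL ℂ X X ℂ).flip (M.r a)
  r a := (compL ℂ X X ℂ).flip (M.l a)
  l_mul a b f := by ext x; simp [M.r_mul]
  r_mul a b f := by ext x; simp [M.l_mul]
  lr a b f := by ext x; simp [M.lr]

def IsDerivation (M : Bimod A X) (D : A →L[ℂ] X) : Prop :=
  ∀ a b, D (a * b) = M.l a (D b) + M.r b (D a)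

def IsInner (M : Bimod A X) (D : A →L[ℂ] X) : Prop :=
  ∃ x, ∀ a, D a = M.l a x - M.r a x

noncomputable def Bimod.restrict (M : Bimod A X) (Y : Submodule ℂ X)
    (hl : ∀ a, ∀ y ∈ Y, M.l a y ∈ Y) (hr : ∀ a, ∀ y ∈ Y, M.r a y ∈ Y) :
    Bimod A Y where
  l a := ((M.l a).comp Y.subtypeL).codRestrict Y fun y => hl a y y.2
  r a := ((M.r a).comp Y.subtypeL).codRestrict Y fun y => hr a y y.2
  l_mul a b y := Subtype.ext (M.l_mul a b y)
  r_mul a b y := Subtype.ext (M.r_mul a b y)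
  lr a b y := Subtype.ext (M.lr a b y)

noncomputable def algBimod (A : Type*) [NormedRing A] [NormedAlgebra ℂ A] : Bimod A A where
  l a := ContinuousLinearMap.mul ℂ A a
  r a := (ContinuousLinearMap.mul ℂ A).flip a
  l_mul a b x := mul_assoc a b x
  r_mul a b x := (mul_assoc x a b).symm
  lr a b x := (mul_assoc a x b).symm

noncomputable def idealBimod (I : Submodule ℂ A)
    (hL : ∀ a, ∀ x ∈ I, a * x ∈ I) (hR : ∀ a, ∀ x ∈ I, x * a ∈ I) :
    Bimod A I where
  l a := ((ContinuousLinearMap.mul ℂ A a).comp I.subtypeL).codRestrict I fun x => hL a x x.2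
  r a := (((ContinuousLinearMap.mul ℂ A).flip a).comp I.subtypeL).codRestrict I fun x => hR a x x.2
  l_mul a b x := Subtype.ext (mul_assoc a b (x : A))
  r_mul a b x := Subtype.ext (mul_assoc (x : A) a b).symm
  lr a b x := Subtype.ext (mul_assoc a (x : A) b).symm

/-- $A^2$, the linear span of the set of products $\{ab : a, b ∈ A\}$. -/
noncomputable def sq (A : Type*) [NormedRing A] [NormedAlgebra ℂ A] : Submodule ℂ A :=
  Submodule.span ℂ {x : A | ∃ a b : A, x = a * b}

theorem stmt_9
    {A : Type*} [NormedRing A] [NormedAlgebra ℂ A] [CompleteSpace A]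
    (I : Submodule ℂ A) (hIc : IsClosed (I : Set A))
    (hL : ∀ a : A, ∀ x ∈ I, a * x ∈ I) (hR : ∀ a : A, ∀ x ∈ I, x * a ∈ I)
    (hsq : sq A ≤ I)
    (h : ∀ D : A →L[ℂ] (↥I →L[ℂ] ℂ),
        IsDerivation (idealBimod I hL hR).dual D → IsInner (idealBimod I hL hR).dual D) :
    closure (sq A : Set A) = (I : Set A) := by
  haveI : CompleteSpace I := hIc.completeSpace_coe
  apply Set.Subset.antisymm
  · exact closure_minimal hsq hIc
  · intro x hxI
    by_contra hx
    -- the closure of sq A inside A, as a submodule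
    set K : Submodule ℂ A := (sq A).topologicalClosure with hK
    have hKset : (K : Set A) = closure (sq A : Set A) := rfl
    -- its pullback to I
    set J : Submodule ℂ I := K.comap I.subtype with hJ
    have hJc : IsClosed (J : Set I) := by
      have : (J : Set I) = (Subtype.val : I → A) ⁻¹' (K : Set A) := rfl
      rw [this]
      exact ((sq A).isClosed_topologicalClosure).preimage continuous_subtype_val
    haveI : IsClosed (J : Set I) := hJc
    -- quotient map, continuous
    let ψ : I →L[ℂ] (I ⧸ J) :=
      LinearMap.mkContinuous J.mkQ 1
        (fun m => by simpa using Submodule.Quotient.norm_mk_le J m)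
    set x₀ : I := ⟨x, hxI⟩ with hx₀
    have hx₀J : x₀ ∉ J := by
      intro hmem
      exact hx hmem
    have hmkne : (Submodule.Quotient.mk x₀ : I ⧸ J) ≠ 0 := fun h0 =>
      hx₀J ((Submodule.Quotient.mk_eq_zero J).mp h0)
    obtain ⟨g, hg1, hgx⟩ := exists_dual_vector ℂ (Submodule.Quotient.mk x₀ : I ⧸ J) (norm_ne_zero_iff.2 hmkne)
    set φ : I →L[ℂ] ℂ := g.comp ψ with hφ
    have hφ0 : ∀ y : I, (y : A) ∈ closure (sq A : Set A) → φ y = 0 := by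
      intro y hy
      have hyJ : y ∈ J := hy
      have : ψ y = 0 := by
        show J.mkQ y = 0
        simpa [Submodule.mkQ_apply, Submodule.Quotient.mk_eq_zero] using hyJ
      simp [hφ, ContinuousLinearMap.comp_apply, this]
    have hφx₀ : φ x₀ ≠ 0 := by
      have : φ x₀ = ‖(Submodule.Quotient.mk x₀ : I ⧸ J)‖ := by
        exact hgx
      rw [this]
      exact_mod_cast (norm_ne_zero_iff.2 hmkne)
    -- extend φ to all of A
    obtain ⟨Φ, hΦ, -⟩ := exists_extension_norm_eq I φ
    -- φ vanishes on products
    have hprod : ∀ a b : A, ∀ (hab : a * b ∈ I), φ ⟨a * b, hab⟩ = 0 := by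
      intro a b hab
      exact hφ0 _ (subset_closure (Submodule.subset_span ⟨a, b, rfl⟩))
    have hΦprod : ∀ a b : A, Φ (a * b) = 0 := by
      intro a b
      have hab : a * b ∈ I := hsq (Submodule.subset_span ⟨a, b, rfl⟩)
      have := hΦ ⟨a * b, hab⟩
      rw [this]
      exact hprod a b hab
    -- the derivation
    set D : A →L[ℂ] (I →L[ℂ] ℂ) := Φ.smulRight φ with hD
    have hDder : IsDerivation (idealBimod I hL hR).dual D := by
      intro a b
      ext y
      have h1 : φ (((((ContinuousLinearMap.mul ℂ A).flip a).comp I.subtypeL).codRestrict I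
          fun z => hR a (↑z) z.2) y) = 0 :=
        hφ0 _ (subset_closure (Submodule.subset_span ⟨(y : A), a, rfl⟩))
      have h2 : φ ((((ContinuousLinearMap.mul ℂ A b).comp I.subtypeL).codRestrict I
          fun z => hL b (↑z) z.2) y) = 0 :=
        hφ0 _ (subset_closure (Submodule.subset_span ⟨b, (y : A), rfl⟩))
      simp only [hD, Bimod.dual, idealBimod, ContinuousLinearMap.smulRight_apply,
        ContinuousLinearMap.add_apply, ContinuousLinearMap.flip_apply, compL_apply,
        ContinuousLinearMap.comp_apply,
        ContinuousLinearMap.smul_apply, smul_eq_mul]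
      rw [hΦprod a b, h1, h2]
      ring
    obtain ⟨f, hf⟩ := h D hDder
    have := congrArg (fun T => T x₀) (hf x)
    simp only [hD, Bimod.dual, idealBimod, ContinuousLinearMap.smulRight_apply,
      ContinuousLinearMap.sub_apply, ContinuousLinearMap.flip_apply, compL_apply,
      ContinuousLinearMap.comp_apply,
      ContinuousLinearMap.smul_apply, smul_eq_mul] at this
    have hΦx : Φ x = φ x₀ := hΦ x₀
    rw [hΦx] at this
    have hsame : (((((ContinuousLinearMap.mul ℂ A).flip x).comp I.subtypeL).codRestrict I
          fun z => hR x (↑z) z.2) x₀)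
        = ((((ContinuousLinearMap.mul ℂ A x).comp I.subtypeL).codRestrict I
          fun z => hL x (↑z) z.2) x₀) :=
      Subtype.ext rfl
    rw [hsame, sub_self] at this
    exact hφx₀ (mul_self_eq_zero.mp this)

end Paper
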